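/- Fix p ∈ (0,1). For a > a_* := p^p·(1−p)^(1−p), let β(a) < α(a) denote the two positive roots of Q_{p,a}, and define Λ_p(a) := 2p(1−p)²·√a · ∫_{β(a)}^{α(a)} x^(1−p) / ((a·x^(2(1−p)) − p²)·√(Q_{p,a}(x))) dx, where the (improper) integral converges. Then the function Λ_p : (a_*, ∞) → ℝ is continuous and takes only positive values. -/

import Mathlib

open Real Set MeasureTheory intervalIntegral

/-- The function `Q_{p,a}(x) = a·x^(2(1−p)) − (1−p)²·x² − p²`. -/
noncomputable def Qfun (p a x : ℝ) : ℝ :=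
  a * x ^ (2 * (1 - p)) - (1 - p) ^ 2 * x ^ 2 - p ^ 2

namespace LamAux

noncomputable def psiF (p x : ℝ) : ℝ :=
  (1 - p) ^ 2 * x ^ (2 * p) + p ^ 2 * x ^ (-(2 * (1 - p)))

noncomputable def psiD (p x : ℝ) : ℝ :=
  2 * p * (1 - p) ^ 2 * x ^ (2 * p - 1) - 2 * (1 - p) * p ^ 2 * x ^ (-(2 * (1 - p)) - 1)

noncomputable def x0 (p : ℝ) : ℝ := Real.sqrt (p / (1 - p))

theorem Qfun_eq (p a x : ℝ) (hx : 0 < x) :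
    Qfun p a x = x ^ (2 * (1 - p)) * (a - psiF p x) := by
  have h1 : x ^ (2 * (1 - p)) * x ^ (2 * p) = x ^ 2 := by
    rw [← Real.rpow_add hx]
    rw [show 2 * (1 - p) + 2 * p = ((2:ℕ):ℝ) by push_cast; ring]
    exact Real.rpow_natCast x 2
  have h2 : x ^ (2 * (1 - p)) * x ^ (-(2 * (1 - p))) = 1 := by
    rw [← Real.rpow_add hx, add_neg_cancel, Real.rpow_zero]
  simp only [Qfun, psiF]
  nlinarith [h1, h2]

theorem hasDerivAt_psiF (p x : ℝ) (hx : 0 < x) :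
    HasDerivAt (psiF p) (psiD p x) x := by
  have ha := (Real.hasDerivAt_rpow_const (x := x) (p := 2 * p) (Or.inl hx.ne')).const_mul
    ((1 - p) ^ 2)
  have hb := (Real.hasDerivAt_rpow_const (x := x) (p := -(2 * (1 - p))) (Or.inl hx.ne')).const_mul
    (p ^ 2)
  have h : HasDerivAt (fun y => (1 - p) ^ 2 * y ^ (2 * p) + p ^ 2 * y ^ (-(2 * (1 - p)))) _ x :=
    ha.add hb
  have e : psiD p x = (1 - p) ^ 2 * (2 * p * x ^ (2 * p - 1)) +
      p ^ 2 * (-(2 * (1 - p)) * x ^ (-(2 * (1 - p)) - 1)) := by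
    simp only [psiD]
    ring
  rw [e]
  exact h

theorem psiD_eq (p x : ℝ) (hx : 0 < x) :
    psiD p x = 2 * p * (1 - p) * x ^ (-(2 * (1 - p)) - 1) * ((1 - p) * x ^ 2 - p) := by
  have h1 : x ^ (-(2 * (1 - p)) - 1) * x ^ 2 = x ^ (2 * p - 1) := by
    rw [show (x:ℝ) ^ (2:ℕ) = x ^ ((2:ℕ):ℝ) from (Real.rpow_natCast x 2).symm,
      ← Real.rpow_add hx]
    norm_num
    ring_nf
  simp only [psiD]
  linear_combination (-2*p*(1-p)^2) * h1


theorem x0_pos (hp0 : 0 < p) (hp1 : p < 1) : 0 < x0 p :=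
  Real.sqrt_pos.2 (div_pos hp0 (by linarith))

theorem psiD_neg (hp0 : 0 < p) (hp1 : p < 1) {x : ℝ} (hx : 0 < x) (hlt : x < x0 p) :
    psiD p x < 0 := by
  rw [psiD_eq p x hx]
  have hq : (0:ℝ) < 1 - p := by linarith
  have h2 : x ^ 2 < p / (1 - p) := by
    have := (Real.lt_sqrt hx.le).1 hlt
    simpa [x0] using this
  have hneg : (1 - p) * x ^ 2 - p < 0 := by
    have h3 : x ^ 2 * (1 - p) < p := (lt_div_iff₀ hq).1 h2
    nlinarith
  have hr : 0 < x ^ (-(2 * (1 - p)) - 1) := Real.rpow_pos_of_pos hx _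
  have hpos : 0 < 2 * p * (1 - p) * x ^ (-(2 * (1 - p)) - 1) := by positivity
  nlinarith

theorem psiD_pos (hp0 : 0 < p) (hp1 : p < 1) {x : ℝ} (hlt : x0 p < x) : 0 < psiD p x := by
  have hx : 0 < x := lt_trans (x0_pos hp0 hp1) hlt
  rw [psiD_eq p x hx]
  have hq : (0:ℝ) < 1 - p := by linarith
  have h2 : p / (1 - p) < x ^ 2 := by
    have := (Real.sqrt_lt' hx).1 (by simpa [x0] using hlt)
    simpa using this
  have hneg : 0 < (1 - p) * x ^ 2 - p := by
    have h3 : p < x ^ 2 * (1 - p) := (div_lt_iff₀ hq).1 h2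
    nlinarith
  have hr : 0 < x ^ (-(2 * (1 - p)) - 1) := Real.rpow_pos_of_pos hx _
  have hpos : 0 < 2 * p * (1 - p) * x ^ (-(2 * (1 - p)) - 1) := by positivity
  nlinarith

theorem continuousAt_psiD (hp0 : 0 < p) {x : ℝ} (hx : 0 < x) :
    ContinuousAt (psiD p) x := by
  have h1 : ContinuousAt (fun y : ℝ => y ^ (2 * p - 1)) x :=
    Real.continuousAt_rpow_const x _ (Or.inl hx.ne')
  have h2 : ContinuousAt (fun y : ℝ => y ^ (-(2 * (1 - p)) - 1)) x :=
    Real.continuousAt_rpow_const x _ (Or.inl hx.ne')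
  exact ((continuousAt_const.mul h1).sub (continuousAt_const.mul h2))

theorem continuousAt_psiF (hp0 : 0 < p) {x : ℝ} (hx : 0 < x) :
    ContinuousAt (psiF p) x := (hasDerivAt_psiF p x hx).continuousAt

theorem strictAntiOn_psiF (hp0 : 0 < p) (hp1 : p < 1) :
    StrictAntiOn (psiF p) (Ioc 0 (x0 p)) := by
  apply strictAntiOn_of_deriv_neg (convex_Ioc 0 (x0 p))
  · exact fun x hx => (continuousAt_psiF hp0 hx.1).continuousWithinAt
  · intro x hx
    rw [interior_Ioc] at hx
    rw [(hasDerivAt_psiF p x hx.1).deriv]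
    exact psiD_neg hp0 hp1 hx.1 hx.2

theorem strictMonoOn_psiF (hp0 : 0 < p) (hp1 : p < 1) :
    StrictMonoOn (psiF p) (Ici (x0 p)) := by
  apply strictMonoOn_of_deriv_pos (convex_Ici (x0 p))
  · exact fun x hx => (continuousAt_psiF hp0 (lt_of_lt_of_le (x0_pos hp0 hp1) hx)).continuousWithinAt
  · intro x hx
    rw [interior_Ici] at hx
    rw [(hasDerivAt_psiF p x (lt_trans (x0_pos hp0 hp1) hx)).deriv]
    exact psiD_pos hp0 hp1 hx


variable {p a x : ℝ}

theorem psi_root (hx : 0 < x) (hQ : Qfun p a x = 0) : psiF p x = a := by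
  rw [Qfun_eq p a x hx] at hQ
  have h := Real.rpow_pos_of_pos hx (2 * (1 - p))
  rcases mul_eq_zero.1 hQ with h1 | h2
  · exact absurd h1 h.ne'
  · linarith

theorem psi_lt (hx : 0 < x) (hQ : 0 < Qfun p a x) : psiF p x < a := by
  rw [Qfun_eq p a x hx] at hQ
  have h := Real.rpow_pos_of_pos hx (2 * (1 - p))
  nlinarith

theorem roots_straddle (hp0 : 0 < p) (hp1 : p < 1) {xb xa : ℝ} (hb0 : 0 < xb)
    (hba : xb < xa) (hψb : psiF p xb = a) (hψa : psiF p xa = a)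
    (hmid : ∀ x ∈ Ioo xb xa, psiF p x < a) :
    xb < x0 p ∧ x0 p < xa := by
  constructor
  · by_contra h
    push_neg at h
    have h1 := strictMonoOn_psiF hp0 hp1 (le_refl (x0 p) |>.trans h : xb ∈ Ici (x0 p)) 
      (h.trans hba.le : xa ∈ Ici (x0 p)) hba
    rw [hψb, hψa] at h1; exact lt_irrefl a h1
  · by_contra h
    push_neg at h
    have h1 := strictAntiOn_psiF hp0 hp1 ⟨hb0, hba.le.trans h⟩ ⟨hb0.trans hba, h⟩ hba
    rw [hψb, hψa] at h1; exact lt_irrefl a h1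

theorem beta_mono (hp0 : 0 < p) (hp1 : p < 1) {a' xb xb' : ℝ} (h : a ≤ a')
    (hb0 : 0 < xb) (hb0' : 0 < xb') (hbx : xb < x0 p) (hbx' : xb' < x0 p)
    (hψb : psiF p xb = a) (hψb' : psiF p xb' = a') : xb' ≤ xb := by
  by_contra hc
  push_neg at hc
  have := strictAntiOn_psiF hp0 hp1 ⟨hb0, hbx.le⟩ ⟨hb0', hbx'.le⟩ hc
  rw [hψb, hψb'] at this; linarith

theorem alpha_mono (hp0 : 0 < p) (hp1 : p < 1) {a' xa xa' : ℝ} (h : a ≤ a')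
    (hax : x0 p < xa) (hax' : x0 p < xa')
    (hψa : psiF p xa = a) (hψa' : psiF p xa' = a') : xa ≤ xa' := by
  by_contra hc
  push_neg at hc
  have := strictMonoOn_psiF hp0 hp1 hax'.le hax.le hc
  rw [hψa, hψa'] at this; linarith

theorem sqrt_rpow_two (hp1 : p < 1) (hx : 0 < x) :
    Real.sqrt (x ^ (2 * (1 - p))) = x ^ (1 - p) := by
  have h : x ^ (2 * (1 - p)) = (x ^ (1 - p)) ^ (2:ℕ) := by
    rw [← Real.rpow_natCast (x ^ (1 - p)) 2, ← Real.rpow_mul hx.le]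
    norm_num; ring_nf
  rw [h, Real.sqrt_sq (Real.rpow_nonneg hx.le _)]

theorem sqrtQ_eq (hp1 : p < 1) (hx : 0 < x) (h : 0 ≤ a - psiF p x) :
    Real.sqrt (Qfun p a x) = x ^ (1 - p) * Real.sqrt (a - psiF p x) := by
  rw [Qfun_eq p a x hx, Real.sqrt_mul (Real.rpow_nonneg hx.le _), sqrt_rpow_two hp1 hx]

theorem D_eq : a * x ^ (2 * (1 - p)) - p ^ 2 = Qfun p a x + (1 - p) ^ 2 * x ^ 2 := by
  simp only [Qfun]; ring

theorem F_nonneg (hx : 0 ≤ x) (hQ : 0 ≤ Qfun p a x) :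
    0 ≤ x ^ (1 - p) / ((a * x ^ (2 * (1 - p)) - p ^ 2) * Real.sqrt (Qfun p a x)) := by
  apply div_nonneg (Real.rpow_nonneg hx _)
  apply mul_nonneg _ (Real.sqrt_nonneg _)
  rw [D_eq]; positivity

theorem F_pos (hx : 0 < x) (hQ : 0 < Qfun p a x) (hp1 : p < 1) :
    0 < x ^ (1 - p) / ((a * x ^ (2 * (1 - p)) - p ^ 2) * Real.sqrt (Qfun p a x)) := by
  apply div_pos (Real.rpow_pos_of_pos hx _)
  apply mul_pos _ (Real.sqrt_pos.2 hQ)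
  rw [D_eq]
  have h1p : (0:ℝ) < 1 - p := by linarith
  have : (0:ℝ) < (1-p)^2 * x^2 := mul_pos (pow_pos h1p 2) (pow_pos hx 2)
  linarith

theorem F_le (hp1 : p < 1) (hx : 0 < x) (hlt : psiF p x < a) :
    x ^ (1 - p) / ((a * x ^ (2 * (1 - p)) - p ^ 2) * Real.sqrt (Qfun p a x)) ≤
      1 / ((1 - p) ^ 2 * x ^ 2 * Real.sqrt (a - psiF p x)) := by
  have hs : 0 < a - psiF p x := by linarith
  have hQ : 0 < Qfun p a x := by
    rw [Qfun_eq p a x hx]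
    exact mul_pos (Real.rpow_pos_of_pos hx _) hs
  have h1p : (0:ℝ) < 1 - p := by linarith
  have hq2 : (0:ℝ) < (1 - p) ^ 2 * x ^ 2 := mul_pos (pow_pos h1p 2) (pow_pos hx 2)
  have hD : (1 - p) ^ 2 * x ^ 2 ≤ a * x ^ (2 * (1 - p)) - p ^ 2 := by
    rw [D_eq]; linarith
  have hrp : 0 < x ^ (1 - p) := Real.rpow_pos_of_pos hx _
  have hss : 0 < Real.sqrt (a - psiF p x) := Real.sqrt_pos.2 hs
  rw [sqrtQ_eq hp1 hx hs.le]
  rw [show (a * x ^ (2 * (1 - p)) - p ^ 2) * (x ^ (1 - p) * Real.sqrt (a - psiF p x))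
      = x ^ (1 - p) * ((a * x ^ (2 * (1 - p)) - p ^ 2) * Real.sqrt (a - psiF p x)) by ring]
  rw [div_mul_eq_div_div, div_self hrp.ne']
  apply one_div_le_one_div_of_le (mul_pos hq2 hss)
  exact mul_le_mul_of_nonneg_right hD hss.le


theorem slope_left {s t m : ℝ} (hs : 0 < s) (hψs : psiF p s = a)
    (hm : ∀ y ∈ Icc s t, psiD p y ≤ -m) :
    ∀ x ∈ Icc s t, m * (x - s) ≤ a - psiF p x := by
  intro x hx
  have hder : ∀ y ∈ Icc s t, HasDerivAt (fun y => psiF p y + m * y) (psiD p y + m) y := by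
    intro y hy
    have h0 : (0:ℝ) < y := lt_of_lt_of_le hs hy.1
    have := (hasDerivAt_psiF p y h0).add ((hasDerivAt_id' y).const_mul m)
    simp only [mul_one] at this
    exact this
  have hanti : AntitoneOn (fun y => psiF p y + m * y) (Icc s t) := by
    apply antitoneOn_of_deriv_nonpos (convex_Icc s t)
    · exact fun y hy => (hder y hy).continuousAt.continuousWithinAt
    · intro y hy
      rw [interior_Icc] at hy
      exact (hder y (Ioo_subset_Icc_self hy)).differentiableAt.differentiableWithinAt
    · intro y hy
      rw [interior_Icc] at hy
      rw [(hder y (Ioo_subset_Icc_self hy)).deriv]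
      linarith [hm y (Ioo_subset_Icc_self hy)]
  have h := hanti (left_mem_Icc.2 (hx.1.trans hx.2)) hx hx.1
  simp only at h
  rw [hψs] at h
  linarith

theorem slope_right {s t m : ℝ} (hs : 0 < s) (hψt : psiF p t = a)
    (hm : ∀ y ∈ Icc s t, m ≤ psiD p y) :
    ∀ x ∈ Icc s t, m * (t - x) ≤ a - psiF p x := by
  intro x hx
  have hder : ∀ y ∈ Icc s t, HasDerivAt (fun y => psiF p y - m * y) (psiD p y - m) y := by
    intro y hy
    have h0 : (0:ℝ) < y := lt_of_lt_of_le hs hy.1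
    have := (hasDerivAt_psiF p y h0).sub ((hasDerivAt_id' y).const_mul m)
    simp only [mul_one] at this
    exact this
  have hmono : MonotoneOn (fun y => psiF p y - m * y) (Icc s t) := by
    apply monotoneOn_of_deriv_nonneg (convex_Icc s t)
    · exact fun y hy => (hder y hy).continuousAt.continuousWithinAt
    · intro y hy
      rw [interior_Icc] at hy
      exact (hder y (Ioo_subset_Icc_self hy)).differentiableAt.differentiableWithinAt
    · intro y hy
      rw [interior_Icc] at hy
      rw [(hder y (Ioo_subset_Icc_self hy)).deriv]
      linarith [hm y (Ioo_subset_Icc_self hy)]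
  have h := hmono hx (right_mem_Icc.2 (hx.1.trans hx.2)) hx.2
  simp only at h
  rw [hψt] at h
  linarith


theorem F_meas (p a : ℝ) :
    Measurable (fun x : ℝ =>
      x ^ (1 - p) / ((a * x ^ (2 * (1 - p)) - p ^ 2) * Real.sqrt (Qfun p a x))) := by
  have h1 : Measurable fun x : ℝ => x ^ (1 - p) := by fun_prop
  have h2 : Measurable fun x : ℝ => a * x ^ (2 * (1 - p)) - p ^ 2 := by fun_prop
  have h3 : Measurable fun x : ℝ => Real.sqrt (Qfun p a x) := by
    unfold Qfun; fun_prop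
  exact h1.div (h2.mul h3)


theorem Qpos_of_psi_lt {a x : ℝ} (hx : 0 < x) (h : psiF p x < a) : 0 < Qfun p a x := by
  rw [Qfun_eq p a x hx]
  exact mul_pos (Real.rpow_pos_of_pos hx _) (by linarith)

theorem mid_contOn (hp1 : p < 1) {a s t : ℝ} (hs : 0 < s)
    (hlt : ∀ x ∈ Icc s t, psiF p x < a) :
    ContinuousOn (fun x => x ^ (1 - p) /
      ((a * x ^ (2 * (1 - p)) - p ^ 2) * Real.sqrt (Qfun p a x))) (Icc s t) := by
  apply ContinuousOn.div
  · intro x hx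
    exact (Real.continuousAt_rpow_const x _ (Or.inl (lt_of_lt_of_le hs hx.1).ne')).continuousWithinAt
  · apply ContinuousOn.mul
    · apply ContinuousOn.sub _ continuousOn_const
      apply ContinuousOn.mul continuousOn_const
      intro x hx
      exact (Real.continuousAt_rpow_const x _
        (Or.inl (lt_of_lt_of_le hs hx.1).ne')).continuousWithinAt
    · apply Real.continuous_sqrt.comp_continuousOn
      unfold Qfun
      have hrp : ContinuousOn (fun x : ℝ => a * x ^ (2 * (1 - p))) (Icc s t) := by
        apply ContinuousOn.mul continuousOn_const
        intro x hx
        exact (Real.continuousAt_rpow_const x _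
          (Or.inl (lt_of_lt_of_le hs hx.1).ne')).continuousWithinAt
      exact (hrp.sub (continuousOn_const.mul (continuousOn_pow 2))).sub continuousOn_const
  · intro x hx
    have hxp : 0 < x := lt_of_lt_of_le hs hx.1
    have hQ : 0 < Qfun p a x := Qpos_of_psi_lt hxp (hlt x hx)
    have h1p : (0:ℝ) < 1 - p := by linarith
    have hD : 0 < a * x ^ (2 * (1 - p)) - p ^ 2 := by
      rw [D_eq]
      have : (0:ℝ) < (1-p)^2 * x^2 := mul_pos (pow_pos h1p 2) (pow_pos hxp 2)
      linarith
    exact (mul_pos hD (Real.sqrt_pos.2 hQ)).ne'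

theorem J_cont (hp1 : p < 1) {b s t a₀ : ℝ} (hs : 0 < s) (hst : s ≤ t)
    (hψ : ∀ x ∈ Icc s t, psiF p x ≤ b) (hb : b < a₀) :
    ContinuousAt (fun a => ∫ x in s..t, x ^ (1 - p) /
      ((a * x ^ (2 * (1 - p)) - p ^ 2) * Real.sqrt (Qfun p a x))) a₀ := by
  have h1p : (0:ℝ) < 1 - p := by linarith
  have hr : 0 < (a₀ - b) / 2 := by linarith
  apply intervalIntegral.continuousAt_of_dominated_interval
    (bound := fun _ : ℝ => 1 / ((1 - p) ^ 2 * s ^ 2 * Real.sqrt ((a₀ - b) / 2)))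
  · exact Filter.Eventually.of_forall fun a => ((F_meas p a).aestronglyMeasurable.restrict)
  · have hev : ∀ᶠ a in nhds a₀, (a₀ + b) / 2 < a := eventually_gt_nhds (by linarith)
    refine hev.mono fun a ha => ?_
    refine Filter.Eventually.of_forall fun x hx => ?_
    rw [uIoc_of_le hst] at hx
    have hxp : 0 < x := hs.trans hx.1
    have hψx : psiF p x ≤ b := hψ x (Ioc_subset_Icc_self hx)
    have hax : (a₀ - b) / 2 ≤ a - psiF p x := by linarith
    have haxpos : psiF p x < a := by linarith
    rw [Real.norm_eq_abs, abs_of_nonneg (F_nonneg hxp.le (Qpos_of_psi_lt hxp haxpos).le)]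
    refine (F_le hp1 hxp haxpos).trans ?_
    apply one_div_le_one_div_of_le
    · have h4 : (0:ℝ) < (1 - p)^2 := pow_pos h1p 2
      have h5 : (0:ℝ) < Real.sqrt ((a₀ - b) / 2) := Real.sqrt_pos.2 hr
      positivity
    · have h1 : s ^ 2 ≤ x ^ 2 := by nlinarith [hx.1, hs]
      have h2 : Real.sqrt ((a₀ - b) / 2) ≤ Real.sqrt (a - psiF p x) := Real.sqrt_le_sqrt hax
      have h3 : (0:ℝ) ≤ Real.sqrt ((a₀ - b) / 2) := Real.sqrt_nonneg _
      have h4 : (0:ℝ) < (1 - p)^2 := pow_pos h1p 2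
      apply mul_le_mul _ h2 h3 (by positivity)
      nlinarith
  · exact intervalIntegrable_const
  · refine Filter.Eventually.of_forall fun x hx => ?_
    rw [uIoc_of_le hst] at hx
    have hxp : 0 < x := hs.trans hx.1
    have hψx : psiF p x ≤ b := hψ x (Ioc_subset_Icc_self hx)
    have hQ : 0 < Qfun p a₀ x := Qpos_of_psi_lt hxp (by linarith)
    have hD : 0 < a₀ * x ^ (2 * (1 - p)) - p ^ 2 := by
      rw [D_eq]
      have : (0:ℝ) < (1-p)^2 * x^2 := mul_pos (pow_pos h1p 2) (pow_pos hxp 2)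
      linarith
    have c1 : Continuous fun a : ℝ => a * x ^ (2 * (1 - p)) - p ^ 2 := by fun_prop
    have c2 : Continuous fun a : ℝ => Real.sqrt (Qfun p a x) := by
      unfold Qfun; fun_prop
    exact ContinuousAt.div continuousAt_const (c1.continuousAt.mul c2.continuousAt)
      (mul_pos hD (Real.sqrt_pos.2 hQ)).ne'


theorem tail_left (hp1 : p < 1) {s t C m : ℝ}
    (hs : 0 < s) (hst : s ≤ t) (hm : 0 < m)
    (hψs : psiF p s = a)
    (hlt : ∀ x ∈ Ioc s t, psiF p x < a)
    (hslope : ∀ x ∈ Icc s t, m * (x - s) ≤ a - psiF p x)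
    (hCx : ∀ x ∈ Ioc s t, 1 / ((1 - p) ^ 2 * x ^ 2) ≤ C) :
    IntervalIntegrable (fun x => x ^ (1 - p) /
        ((a * x ^ (2 * (1 - p)) - p ^ 2) * Real.sqrt (Qfun p a x))) volume s t ∧
      (∫ x in s..t, x ^ (1 - p) /
        ((a * x ^ (2 * (1 - p)) - p ^ 2) * Real.sqrt (Qfun p a x))) ≤
        C / Real.sqrt m * (2 * Real.sqrt (t - s)) := by
  set F := fun x : ℝ => x ^ (1 - p) /
      ((a * x ^ (2 * (1 - p)) - p ^ 2) * Real.sqrt (Qfun p a x)) with hF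
  set g := fun x : ℝ => C / Real.sqrt m * (x - s) ^ (-(1/2) : ℝ) with hg
  -- integrability of g
  have hgi : IntervalIntegrable g volume s t := by
    have h0 : IntervalIntegrable (fun x : ℝ => x ^ (-(1/2) : ℝ)) volume 0 (t - s) :=
      intervalIntegral.intervalIntegrable_rpow' (by norm_num)
    have h1 := (h0.comp_sub_right s).const_mul (C / Real.sqrt m)
    rw [zero_add, sub_add_cancel] at h1
    exact h1
  rcases hst.eq_or_lt with heq | hstlt
  · subst heq
    refine ⟨IntervalIntegrable.refl, ?_⟩
    rw [intervalIntegral.integral_same, sub_self, Real.sqrt_zero]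
    simp
  set F := fun x : ℝ => x ^ (1 - p) /
      ((a * x ^ (2 * (1 - p)) - p ^ 2) * Real.sqrt (Qfun p a x)) with hF
  set g := fun x : ℝ => C / Real.sqrt m * (x - s) ^ (-(1/2) : ℝ) with hg
  have hq1 : (0:ℝ) < 1 - p := by linarith
  have hC0 : 0 < C := by
    refine lt_of_lt_of_le ?_ (hCx t ⟨hstlt, le_refl t⟩)
    have hts : (0:ℝ) < t := hs.trans hstlt
    positivity
  have hgi : IntervalIntegrable g volume s t := by
    have h0 : IntervalIntegrable (fun x : ℝ => x ^ (-(1/2) : ℝ)) volume 0 (t - s) :=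
      intervalIntegral.intervalIntegrable_rpow' (by norm_num)
    have h1 := (h0.comp_sub_right s).const_mul (C / Real.sqrt m)
    rw [zero_add, sub_add_cancel] at h1
    exact h1
  have hnn : ∀ x ∈ Icc s t, 0 ≤ F x := by
    intro x hx
    have hxpos : 0 < x := lt_of_lt_of_le hs hx.1
    apply F_nonneg hxpos.le
    rw [Qfun_eq p a x hxpos]
    apply mul_nonneg (Real.rpow_nonneg hxpos.le _)
    have h1 := hslope x hx
    nlinarith [mul_nonneg hm.le (sub_nonneg.2 hx.1)]
  have hb : ∀ x ∈ Icc s t, F x ≤ g x := by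
    intro x hx
    rcases (hx.1 : s ≤ x).eq_or_lt with heq | hlt'
    · have hQs : Qfun p a s = 0 := by
        rw [Qfun_eq p a s hs, hψs, sub_self, mul_zero]
      rw [hF, hg]
      simp only [← heq, hQs, Real.sqrt_zero, mul_zero, div_zero, sub_self]
      rw [Real.zero_rpow (by norm_num : (-(1/2):ℝ) ≠ 0), mul_zero]
    · have hxpos : 0 < x := hs.trans hlt'
      have h1 := F_le hp1 hxpos (hlt x ⟨hlt', hx.2⟩)
      refine h1.trans ?_
      have hms : 0 < m * (x - s) := mul_pos hm (sub_pos.2 hlt')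
      have hax : 0 < a - psiF p x := lt_of_lt_of_le hms (hslope x hx)
      have e1 : 1 / ((1 - p) ^ 2 * x ^ 2 * Real.sqrt (a - psiF p x)) =
          1 / ((1 - p) ^ 2 * x ^ 2) * (1 / Real.sqrt (a - psiF p x)) := by
        rw [div_mul_div_comm, one_mul]
      have e2 : g x = C * (1 / Real.sqrt (m * (x - s))) := by
        rw [hg]
        simp only
        rw [Real.sqrt_mul hm.le, Real.rpow_neg (sub_nonneg.2 hlt'.le),
          ← Real.sqrt_eq_rpow, div_eq_mul_inv, one_div, mul_inv]
        ring
      rw [e1, e2]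
      have h2 : Real.sqrt (m * (x - s)) ≤ Real.sqrt (a - psiF p x) :=
        Real.sqrt_le_sqrt (hslope x hx)
      have h3 : 1 / Real.sqrt (a - psiF p x) ≤ 1 / Real.sqrt (m * (x - s)) :=
        one_div_le_one_div_of_le (Real.sqrt_pos.2 hms) h2
      apply mul_le_mul (hCx x ⟨hlt', hx.2⟩) h3 (by positivity) hC0.le
  have hFi : IntervalIntegrable F volume s t := by
    rw [intervalIntegrable_iff_integrableOn_Ioc_of_le hst]
    refine Integrable.mono' ((intervalIntegrable_iff_integrableOn_Ioc_of_le hst).1 hgi)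
      ((F_meas p a).aestronglyMeasurable.restrict) ?_
    refine (ae_restrict_iff' measurableSet_Ioc).2 (ae_of_all _ fun x hx => ?_)
    rw [Real.norm_eq_abs, abs_of_nonneg (hnn x (Ioc_subset_Icc_self hx))]
    exact hb x (Ioc_subset_Icc_self hx)
  refine ⟨hFi, ?_⟩
  have hmono := intervalIntegral.integral_mono_on hst hFi hgi hb
  refine hmono.trans (le_of_eq ?_)
  rw [hg]
  simp only
  rw [intervalIntegral.integral_const_mul]
  have e3 : ∫ x in s..t, (x - s) ^ (-(1/2) : ℝ) = 2 * Real.sqrt (t - s) := by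
    rw [intervalIntegral.integral_comp_sub_right (fun y => y ^ (-(1/2) : ℝ)) s, sub_self]
    rw [integral_rpow (Or.inl (by norm_num))]
    rw [show (-(1/2) : ℝ) + 1 = 1/2 by norm_num]
    rw [Real.zero_rpow (by norm_num : (1/2 : ℝ) ≠ 0), Real.sqrt_eq_rpow]
    ring
  rw [e3]

theorem tail_right (hp1 : p < 1) {s t C m : ℝ}
    (hs : 0 < s) (hst : s ≤ t) (hm : 0 < m)
    (hψt : psiF p t = a)
    (hlt : ∀ x ∈ Ico s t, psiF p x < a)
    (hslope : ∀ x ∈ Icc s t, m * (t - x) ≤ a - psiF p x)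
    (hCx : ∀ x ∈ Ico s t, 1 / ((1 - p) ^ 2 * x ^ 2) ≤ C) :
    IntervalIntegrable (fun x => x ^ (1 - p) /
        ((a * x ^ (2 * (1 - p)) - p ^ 2) * Real.sqrt (Qfun p a x))) volume s t ∧
      (∫ x in s..t, x ^ (1 - p) /
        ((a * x ^ (2 * (1 - p)) - p ^ 2) * Real.sqrt (Qfun p a x))) ≤
        C / Real.sqrt m * (2 * Real.sqrt (t - s)) := by
  rcases hst.eq_or_lt with heq | hstlt
  · subst heq
    refine ⟨IntervalIntegrable.refl, ?_⟩
    rw [intervalIntegral.integral_same, sub_self, Real.sqrt_zero]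
    simp
  set F := fun x : ℝ => x ^ (1 - p) /
      ((a * x ^ (2 * (1 - p)) - p ^ 2) * Real.sqrt (Qfun p a x)) with hF
  set g := fun x : ℝ => C / Real.sqrt m * (t - x) ^ (-(1/2) : ℝ) with hg
  have hq1 : (0:ℝ) < 1 - p := by linarith
  have hC0 : 0 < C := by
    refine lt_of_lt_of_le ?_ (hCx s ⟨le_refl s, hstlt⟩)
    positivity
  have hgi : IntervalIntegrable g volume s t := by
    have h0 : IntervalIntegrable (fun x : ℝ => x ^ (-(1/2) : ℝ)) volume 0 (t - s) :=
      intervalIntegral.intervalIntegrable_rpow' (by norm_num)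
    have h1 := (h0.comp_sub_left t).const_mul (C / Real.sqrt m)
    rw [sub_zero, sub_sub_cancel] at h1
    exact h1.symm
  have hnn : ∀ x ∈ Icc s t, 0 ≤ F x := by
    intro x hx
    have hxpos : 0 < x := lt_of_lt_of_le hs hx.1
    apply F_nonneg hxpos.le
    rw [Qfun_eq p a x hxpos]
    apply mul_nonneg (Real.rpow_nonneg hxpos.le _)
    have h1 := hslope x hx
    nlinarith [mul_nonneg hm.le (sub_nonneg.2 hx.2)]
  have hb : ∀ x ∈ Icc s t, F x ≤ g x := by
    intro x hx
    have hxpos : 0 < x := lt_of_lt_of_le hs hx.1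
    rcases (hx.2 : x ≤ t).eq_or_lt with heq | hlt'
    · subst heq
      have hQt : Qfun p a x = 0 := by
        rw [Qfun_eq p a x hxpos, hψt, sub_self, mul_zero]
      rw [hF, hg]
      simp only [hQt, Real.sqrt_zero, mul_zero, div_zero, sub_self]
      rw [Real.zero_rpow (by norm_num : (-(1/2):ℝ) ≠ 0), mul_zero]
    · have h1 := F_le hp1 hxpos (hlt x ⟨hx.1, hlt'⟩)
      refine h1.trans ?_
      have hms : 0 < m * (t - x) := mul_pos hm (sub_pos.2 hlt')
      have hax : 0 < a - psiF p x := lt_of_lt_of_le hms (hslope x hx)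
      have e1 : 1 / ((1 - p) ^ 2 * x ^ 2 * Real.sqrt (a - psiF p x)) =
          1 / ((1 - p) ^ 2 * x ^ 2) * (1 / Real.sqrt (a - psiF p x)) := by
        rw [div_mul_div_comm, one_mul]
      have e2 : g x = C * (1 / Real.sqrt (m * (t - x))) := by
        rw [hg]
        simp only
        rw [Real.sqrt_mul hm.le, Real.rpow_neg (sub_nonneg.2 hlt'.le),
          ← Real.sqrt_eq_rpow, div_eq_mul_inv, one_div, mul_inv]
        ring
      rw [e1, e2]
      have h2 : Real.sqrt (m * (t - x)) ≤ Real.sqrt (a - psiF p x) :=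
        Real.sqrt_le_sqrt (hslope x hx)
      have h3 : 1 / Real.sqrt (a - psiF p x) ≤ 1 / Real.sqrt (m * (t - x)) :=
        one_div_le_one_div_of_le (Real.sqrt_pos.2 hms) h2
      apply mul_le_mul (hCx x ⟨hx.1, hlt'⟩) h3 (by positivity) hC0.le
  have hFi : IntervalIntegrable F volume s t := by
    rw [intervalIntegrable_iff_integrableOn_Ioc_of_le hst]
    refine Integrable.mono' ((intervalIntegrable_iff_integrableOn_Ioc_of_le hst).1 hgi)
      ((F_meas p a).aestronglyMeasurable.restrict) ?_
    refine (ae_restrict_iff' measurableSet_Ioc).2 (ae_of_all _ fun x hx => ?_)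
    rw [Real.norm_eq_abs, abs_of_nonneg (hnn x (Ioc_subset_Icc_self hx))]
    exact hb x (Ioc_subset_Icc_self hx)
  refine ⟨hFi, ?_⟩
  have hmono := intervalIntegral.integral_mono_on hst hFi hgi hb
  refine hmono.trans (le_of_eq ?_)
  rw [hg]
  simp only
  rw [intervalIntegral.integral_const_mul]
  have e3 : ∫ x in s..t, (t - x) ^ (-(1/2) : ℝ) = 2 * Real.sqrt (t - s) := by
    rw [intervalIntegral.integral_comp_sub_left (fun y => y ^ (-(1/2) : ℝ)) t, sub_self]
    rw [integral_rpow (Or.inl (by norm_num))]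
    rw [show (-(1/2) : ℝ) + 1 = 1/2 by norm_num]
    rw [Real.zero_rpow (by norm_num : (1/2 : ℝ) ≠ 0), Real.sqrt_eq_rpow]
    ring
  rw [e3]


theorem sqrt_spacing {m s t a b : ℝ} (hm : 0 < m) (hsp : m * (t - s) ≤ a - b) :
    Real.sqrt (t - s) ≤ Real.sqrt (a - b) / Real.sqrt m := by
  have hsm : 0 < Real.sqrt m := Real.sqrt_pos.2 hm
  rw [le_div_iff₀ hsm]
  rcases le_or_gt (t - s) 0 with h | h
  · have h0 : Real.sqrt (t - s) = 0 := Real.sqrt_eq_zero_of_nonpos h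
    rw [h0, zero_mul]
    exact Real.sqrt_nonneg _
  · rw [← Real.sqrt_mul h.le]
    apply Real.sqrt_le_sqrt
    nlinarith

theorem tailL_est (hp1 : p < 1) {a b s t C m : ℝ}
    (hs : 0 < s) (hst : s ≤ t) (hm : 0 < m) (hC0 : 0 ≤ C)
    (hψs : psiF p s = a) (hψt : psiF p t = b)
    (hlt : ∀ x ∈ Ioc s t, psiF p x < a)
    (hK : ∀ y ∈ Icc s t, psiD p y ≤ -m)
    (hCx : ∀ x ∈ Ioc s t, 1 / ((1 - p) ^ 2 * x ^ 2) ≤ C) :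
    IntervalIntegrable (fun x => x ^ (1 - p) /
        ((a * x ^ (2 * (1 - p)) - p ^ 2) * Real.sqrt (Qfun p a x))) volume s t ∧
      (0 ≤ ∫ x in s..t, x ^ (1 - p) /
        ((a * x ^ (2 * (1 - p)) - p ^ 2) * Real.sqrt (Qfun p a x))) ∧
      (∫ x in s..t, x ^ (1 - p) /
        ((a * x ^ (2 * (1 - p)) - p ^ 2) * Real.sqrt (Qfun p a x))) ≤
        2 * C / m * Real.sqrt (a - b) := by
  have hslope := slope_left hs hψs hK
  obtain ⟨hint, hbd⟩ := tail_left hp1 hs hst hm hψs hlt hslope hCx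
  have hQnn : ∀ x ∈ Icc s t, 0 ≤ Qfun p a x := by
    intro x hx
    have hxp : 0 < x := lt_of_lt_of_le hs hx.1
    rw [Qfun_eq p a x hxp]
    apply mul_nonneg (Real.rpow_nonneg hxp.le _)
    have := hslope x hx
    nlinarith [mul_nonneg hm.le (sub_nonneg.2 hx.1)]
  refine ⟨hint, ?_, ?_⟩
  · apply intervalIntegral.integral_nonneg hst
    intro x hx
    exact F_nonneg (lt_of_lt_of_le hs hx.1).le (hQnn x hx)
  · refine hbd.trans ?_
    have hsp : m * (t - s) ≤ a - b := by
      have := hslope t (right_mem_Icc.2 hst)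
      rw [hψt] at this; linarith
    have h1 := sqrt_spacing hm hsp
    have hsm : 0 < Real.sqrt m := Real.sqrt_pos.2 hm
    have h2 : C / Real.sqrt m * (2 * Real.sqrt (t - s)) ≤
        C / Real.sqrt m * (2 * (Real.sqrt (a - b) / Real.sqrt m)) := by
      apply mul_le_mul_of_nonneg_left (by linarith) (by positivity)
    refine h2.trans (le_of_eq ?_)
    have : Real.sqrt m * Real.sqrt m = m := Real.mul_self_sqrt hm.le
    field_simp
    rw [Real.sq_sqrt hm.le]; ring

theorem tailR_est (hp1 : p < 1) {a b s t C m : ℝ}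
    (hs : 0 < s) (hst : s ≤ t) (hm : 0 < m) (hC0 : 0 ≤ C)
    (hψt : psiF p t = a) (hψs : psiF p s = b)
    (hlt : ∀ x ∈ Ico s t, psiF p x < a)
    (hK : ∀ y ∈ Icc s t, m ≤ psiD p y)
    (hCx : ∀ x ∈ Ico s t, 1 / ((1 - p) ^ 2 * x ^ 2) ≤ C) :
    IntervalIntegrable (fun x => x ^ (1 - p) /
        ((a * x ^ (2 * (1 - p)) - p ^ 2) * Real.sqrt (Qfun p a x))) volume s t ∧
      (0 ≤ ∫ x in s..t, x ^ (1 - p) /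
        ((a * x ^ (2 * (1 - p)) - p ^ 2) * Real.sqrt (Qfun p a x))) ∧
      (∫ x in s..t, x ^ (1 - p) /
        ((a * x ^ (2 * (1 - p)) - p ^ 2) * Real.sqrt (Qfun p a x))) ≤
        2 * C / m * Real.sqrt (a - b) := by
  have hslope := slope_right hs hψt hK
  obtain ⟨hint, hbd⟩ := tail_right hp1 hs hst hm hψt hlt hslope hCx
  have hQnn : ∀ x ∈ Icc s t, 0 ≤ Qfun p a x := by
    intro x hx
    have hxp : 0 < x := lt_of_lt_of_le hs hx.1
    rw [Qfun_eq p a x hxp]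
    apply mul_nonneg (Real.rpow_nonneg hxp.le _)
    have := hslope x hx
    nlinarith [mul_nonneg hm.le (sub_nonneg.2 hx.2)]
  refine ⟨hint, ?_, ?_⟩
  · apply intervalIntegral.integral_nonneg hst
    intro x hx
    exact F_nonneg (lt_of_lt_of_le hs hx.1).le (hQnn x hx)
  · refine hbd.trans ?_
    have hsp : m * (t - s) ≤ a - b := by
      have := hslope s (left_mem_Icc.2 hst)
      rw [hψs] at this; linarith
    have h1 := sqrt_spacing hm hsp
    have hsm : 0 < Real.sqrt m := Real.sqrt_pos.2 hm
    have h2 : C / Real.sqrt m * (2 * Real.sqrt (t - s)) ≤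
        C / Real.sqrt m * (2 * (Real.sqrt (a - b) / Real.sqrt m)) := by
      apply mul_le_mul_of_nonneg_left (by linarith) (by positivity)
    refine h2.trans (le_of_eq ?_)
    have : Real.sqrt m * Real.sqrt m = m := Real.mul_self_sqrt hm.le
    field_simp
    rw [Real.sq_sqrt hm.le]; ring


theorem psi_le_of_pack {p b βb αb : ℝ} (hψβ : psiF p βb = b) (hψα : psiF p αb = b)
    (hmid : ∀ x ∈ Ioo βb αb, psiF p x < b) : ∀ x ∈ Icc βb αb, psiF p x ≤ b := by
  intro x hx
  rcases hx.1.eq_or_lt with he | hl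
  · rw [← he, hψβ]
  rcases hx.2.eq_or_lt with he2 | hl2
  · rw [he2, hψα]
  · exact (hmid x ⟨hl, hl2⟩).le

set_option maxHeartbeats 1000000 in
theorem master {p astar : ℝ} (hp0 : 0 < p) (hp1 : p < 1) {β α : ℝ → ℝ}
    (pack : ∀ a : ℝ, astar < a →
      0 < β a ∧ β a < α a ∧ psiF p (β a) = a ∧ psiF p (α a) = a ∧
      (∀ x ∈ Ioo (β a) (α a), psiF p x < a) ∧ β a < x0 p ∧ x0 p < α a)
    {A b₀ : ℝ} (hb₀ : astar < b₀) (hbA : b₀ < A) :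
    ∃ KK : ℝ, 0 < KK ∧ ∀ b aa : ℝ, b₀ ≤ b → b < aa → aa ≤ A →
      IntervalIntegrable (fun x => x ^ (1 - p) /
        ((aa * x ^ (2 * (1 - p)) - p ^ 2) * Real.sqrt (Qfun p aa x))) volume (β aa) (α aa) ∧
      |(∫ x in β aa..α aa, x ^ (1 - p) /
          ((aa * x ^ (2 * (1 - p)) - p ^ 2) * Real.sqrt (Qfun p aa x))) -
        ∫ x in β b..α b, x ^ (1 - p) /
          ((aa * x ^ (2 * (1 - p)) - p ^ 2) * Real.sqrt (Qfun p aa x))| ≤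
        KK * Real.sqrt (aa - b) := by
  have h1p : (0:ℝ) < 1 - p := by linarith
  have hx0p : 0 < x0 p := x0_pos hp0 hp1
  obtain ⟨hβb₀0, hβαb₀, hψβb₀, hψαb₀, hmidb₀, hβb₀x, hαb₀x⟩ := pack b₀ hb₀
  obtain ⟨hβA0, hβαA, hψβA, hψαA, hmidA, hβAx, hαAx⟩ := pack A (hb₀.trans hbA)
  have hβAb₀ : β A ≤ β b₀ := beta_mono hp0 hp1 hbA.le hβb₀0 hβA0 hβb₀x hβAx hψβb₀ hψβA
  have hαb₀A : α b₀ ≤ α A := alpha_mono hp0 hp1 hbA.le hαb₀x hαAx hψαb₀ hψαA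
  -- compactness constants
  have hcontL : ContinuousOn (psiD p) (Icc (β A) (β b₀)) :=
    fun y hy => (continuousAt_psiD hp0 (lt_of_lt_of_le hβA0 hy.1)).continuousWithinAt
  obtain ⟨zL, hzLmem, hzLmax⟩ := isCompact_Icc.exists_isMaxOn (nonempty_Icc.2 hβAb₀) hcontL
  have hmL : 0 < -psiD p zL := by
    have := psiD_neg hp0 hp1 (lt_of_lt_of_le hβA0 hzLmem.1) (lt_of_le_of_lt hzLmem.2 hβb₀x)
    linarith
  set mL := -psiD p zL with hmLdef
  have hKL : ∀ y ∈ Icc (β A) (β b₀), psiD p y ≤ -mL := by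
    intro y hy
    have := hzLmax hy
    simp only [hmLdef, neg_neg]
    exact this
  have hcontR : ContinuousOn (psiD p) (Icc (α b₀) (α A)) :=
    fun y hy => (continuousAt_psiD hp0 (lt_of_lt_of_le (hx0p.trans hαb₀x) hy.1)).continuousWithinAt
  obtain ⟨zR, hzRmem, hzRmin⟩ := isCompact_Icc.exists_isMinOn (nonempty_Icc.2 hαb₀A) hcontR
  have hmR : 0 < psiD p zR := psiD_pos hp0 hp1 (lt_of_lt_of_le hαb₀x hzRmem.1)
  set mR := psiD p zR with hmRdef
  have hKR : ∀ y ∈ Icc (α b₀) (α A), mR ≤ psiD p y := fun y hy => hzRmin hy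
  set C := 1 / ((1 - p) ^ 2 * (β A) ^ 2) with hCdef
  have hC0 : 0 < C := one_div_pos.2 (mul_pos (pow_pos h1p 2) (pow_pos hβA0 2))
  refine ⟨2 * C / mL + 2 * C / mR, by positivity, ?_⟩
  intro b aa hb₀b hbaa haaA
  have hbast : astar < b := lt_of_lt_of_le hb₀ hb₀b
  have haast : astar < aa := hbast.trans hbaa
  obtain ⟨hβb0, hβαb, hψβb, hψαb, hmidb, hβbx, hαbx⟩ := pack b hbast
  obtain ⟨hβa0, hβαa, hψβa, hψαa, hmida, hβax, hαax⟩ := pack aa haast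
  have hβab : β aa ≤ β b := beta_mono hp0 hp1 hbaa.le hβb0 hβa0 hβbx hβax hψβb hψβa
  have hβbb₀ : β b ≤ β b₀ := beta_mono hp0 hp1 hb₀b hβb₀0 hβb0 hβb₀x hβbx hψβb₀ hψβb
  have hβAa : β A ≤ β aa := beta_mono hp0 hp1 haaA hβa0 hβA0 hβax hβAx hψβa hψβA
  have hαb₀b : α b₀ ≤ α b := alpha_mono hp0 hp1 hb₀b hαb₀x hαbx hψαb₀ hψαb
  have hαba : α b ≤ α aa := alpha_mono hp0 hp1 hbaa.le hαbx hαax hψαb hψαa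
  have hαaA : α aa ≤ α A := alpha_mono hp0 hp1 haaA hαax hαAx hψαa hψαA
  -- left tail
  have hCxL : ∀ x ∈ Ioc (β aa) (β b), 1 / ((1 - p) ^ 2 * x ^ 2) ≤ C := by
    intro x hx
    have hxA : β A ≤ x := hβAa.trans hx.1.le
    rw [hCdef]
    apply one_div_le_one_div_of_le (mul_pos (pow_pos h1p 2) (pow_pos hβA0 2))
    apply mul_le_mul_of_nonneg_left _ (by positivity)
    exact pow_le_pow_left₀ hβA0.le hxA 2
  have hltL : ∀ x ∈ Ioc (β aa) (β b), psiF p x < aa := by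
    intro x hx
    exact hmida x ⟨hx.1, lt_of_le_of_lt (hx.2.trans hβbb₀) (hβb₀x.trans hαax)⟩
  have hKL' : ∀ y ∈ Icc (β aa) (β b), psiD p y ≤ -mL :=
    fun y hy => hKL y ⟨hβAa.trans hy.1, hy.2.trans hβbb₀⟩
  obtain ⟨hTL_int, hTL_nn, hTL_bd⟩ :=
    tailL_est hp1 hβa0 hβab hmL hC0.le hψβa hψβb hltL hKL' hCxL
  -- middle
  have hψleb := psi_le_of_pack hψβb hψαb hmidb
  have hmidlt : ∀ x ∈ Icc (β b) (α b), psiF p x < aa :=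
    fun x hx => lt_of_le_of_lt (hψleb x hx) hbaa
  have hMid_int : IntervalIntegrable (fun x => x ^ (1 - p) /
      ((aa * x ^ (2 * (1 - p)) - p ^ 2) * Real.sqrt (Qfun p aa x))) volume (β b) (α b) :=
    (mid_contOn hp1 hβb0 hmidlt).intervalIntegrable_of_Icc hβαb.le
  -- right tail
  have hαb0 : 0 < α b := hx0p.trans hαbx
  have hCxR : ∀ x ∈ Ico (α b) (α aa), 1 / ((1 - p) ^ 2 * x ^ 2) ≤ C := by
    intro x hx
    have hxA : β A ≤ x := by
      have : β A ≤ α b := le_trans hβAb₀ (le_trans hβb₀x.le (le_trans hαb₀x.le hαb₀b))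
      exact this.trans hx.1
    rw [hCdef]
    apply one_div_le_one_div_of_le (mul_pos (pow_pos h1p 2) (pow_pos hβA0 2))
    apply mul_le_mul_of_nonneg_left _ (by positivity)
    exact pow_le_pow_left₀ hβA0.le hxA 2
  have hltR : ∀ x ∈ Ico (α b) (α aa), psiF p x < aa := by
    intro x hx
    exact hmida x ⟨lt_of_lt_of_le (hβax.trans (hαb₀x.trans_le hαb₀b)) hx.1, hx.2⟩
  have hKR' : ∀ y ∈ Icc (α b) (α aa), mR ≤ psiD p y :=
    fun y hy => hKR y ⟨hαb₀b.trans hy.1, hy.2.trans hαaA⟩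
  obtain ⟨hTR_int, hTR_nn, hTR_bd⟩ :=
    tailR_est hp1 hαb0 hαba hmR hC0.le hψαa hψαb hltR hKR' hCxR
  -- combine
  have h12 := hTL_int.trans hMid_int
  have htot := h12.trans hTR_int
  refine ⟨htot, ?_⟩
  have e1 := intervalIntegral.integral_add_adjacent_intervals hTL_int hMid_int
  have e2 := intervalIntegral.integral_add_adjacent_intervals h12 hTR_int
  rw [show (∫ x in β aa..α aa, x ^ (1 - p) /
      ((aa * x ^ (2 * (1 - p)) - p ^ 2) * Real.sqrt (Qfun p aa x))) -
      (∫ x in β b..α b, x ^ (1 - p) /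
      ((aa * x ^ (2 * (1 - p)) - p ^ 2) * Real.sqrt (Qfun p aa x))) =
      (∫ x in β aa..β b, x ^ (1 - p) /
      ((aa * x ^ (2 * (1 - p)) - p ^ 2) * Real.sqrt (Qfun p aa x))) +
      (∫ x in α b..α aa, x ^ (1 - p) /
      ((aa * x ^ (2 * (1 - p)) - p ^ 2) * Real.sqrt (Qfun p aa x))) from by linarith]
  rw [abs_of_nonneg (by linarith)]
  calc _ ≤ 2 * C / mL * Real.sqrt (aa - b) + 2 * C / mR * Real.sqrt (aa - b) :=
        add_le_add hTL_bd hTR_bd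
    _ = (2 * C / mL + 2 * C / mR) * Real.sqrt (aa - b) := by ring

end LamAux

/-- The angular progression of the `p`-elastic curve with first-integral constant `a` over one
period of its curvature, where `β a < α a` are the two positive roots of `Q_{p,a}`:
`Λ_p(a) = 2p(1−p)²·√a · ∫_{β(a)}^{α(a)} x^(1−p)/((a·x^(2(1−p)) − p²)·√(Q_{p,a}(x))) dx`. -/
noncomputable def Lam (p : ℝ) (β α : ℝ → ℝ) (a : ℝ) : ℝ :=
  2 * p * (1 - p) ^ 2 * Real.sqrt a *
    ∫ x in β a..α a,
      x ^ (1 - p) / ((a * x ^ (2 * (1 - p)) - p ^ 2) * Real.sqrt (Qfun p a x))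

set_option maxHeartbeats 1000000 in
/-- For fixed `p ∈ (0,1)`, the improper integral defining `Λ_p(a)` converges
for every `a > a_* = p^p·(1−p)^(1−p)`, and `Λ_p : (a_*,∞) → ℝ` is continuous and takes only
positive values. -/
theorem Lam_continuous_positive (p : ℝ) (hp : p ∈ Set.Ioo (0 : ℝ) 1)
    (β α : ℝ → ℝ)
    (hroots : ∀ a : ℝ, p ^ p * (1 - p) ^ (1 - p) < a →
      0 < β a ∧ β a < α a ∧ Qfun p a (β a) = 0 ∧ Qfun p a (α a) = 0 ∧
      ∀ x ∈ Set.Ioo (β a) (α a), 0 < Qfun p a x) :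
    (∀ a : ℝ, p ^ p * (1 - p) ^ (1 - p) < a →
      IntervalIntegrable
        (fun x => x ^ (1 - p) / ((a * x ^ (2 * (1 - p)) - p ^ 2) * Real.sqrt (Qfun p a x)))
        volume (β a) (α a)) ∧
    ContinuousOn (Lam p β α) (Set.Ioi (p ^ p * (1 - p) ^ (1 - p))) ∧
    (∀ a : ℝ, p ^ p * (1 - p) ^ (1 - p) < a → 0 < Lam p β α a) := by
  obtain ⟨hp0, hp1⟩ := hp
  have h1p : (0:ℝ) < 1 - p := by linarith
  have hast0 : 0 < p ^ p * (1 - p) ^ (1 - p) :=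
    mul_pos (Real.rpow_pos_of_pos hp0 _) (Real.rpow_pos_of_pos h1p _)
  have pack : ∀ a : ℝ, p ^ p * (1 - p) ^ (1 - p) < a →
      0 < β a ∧ β a < α a ∧ LamAux.psiF p (β a) = a ∧ LamAux.psiF p (α a) = a ∧
      (∀ x ∈ Set.Ioo (β a) (α a), LamAux.psiF p x < a) ∧
      β a < LamAux.x0 p ∧ LamAux.x0 p < α a := by
    intro a ha
    obtain ⟨h1, h2, h3, h4, h5⟩ := hroots a ha
    have hψβ := LamAux.psi_root h1 h3
    have hψα := LamAux.psi_root (h1.trans h2) h4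
    have hmid : ∀ x ∈ Set.Ioo (β a) (α a), LamAux.psiF p x < a :=
      fun x hx => LamAux.psi_lt (h1.trans hx.1) (h5 x hx)
    obtain ⟨hs1, hs2⟩ := LamAux.roots_straddle hp0 hp1 h1 h2 hψβ hψα hmid
    exact ⟨h1, h2, hψβ, hψα, hmid, hs1, hs2⟩
  have integ : ∀ a : ℝ, p ^ p * (1 - p) ^ (1 - p) < a →
      IntervalIntegrable
        (fun x => x ^ (1 - p) / ((a * x ^ (2 * (1 - p)) - p ^ 2) * Real.sqrt (Qfun p a x)))
        volume (β a) (α a) := by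
    intro a ha
    obtain ⟨KK, hKK0, hKK⟩ := LamAux.master hp0 hp1 pack
      (show p ^ p * (1 - p) ^ (1 - p) < (p ^ p * (1 - p) ^ (1 - p) + a) / 2 by linarith)
      (show (p ^ p * (1 - p) ^ (1 - p) + a) / 2 < a + 1 by linarith)
    exact (hKK ((p ^ p * (1 - p) ^ (1 - p) + a) / 2) a le_rfl (by linarith) (by linarith)).1
  refine ⟨integ, ?_, ?_⟩
  · -- continuity
    intro a₀ ha₀
    rw [Set.mem_Ioi] at ha₀
    apply ContinuousAt.continuousWithinAt
    have hLam : Lam p β α = fun a => 2 * p * (1 - p) ^ 2 * Real.sqrt a *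
        ∫ x in β a..α a,
          x ^ (1 - p) / ((a * x ^ (2 * (1 - p)) - p ^ 2) * Real.sqrt (Qfun p a x)) := rfl
    rw [hLam]
    apply ContinuousAt.mul
    · exact ((continuous_const.mul Real.continuous_sqrt)).continuousAt
    · set b₀ := (p ^ p * (1 - p) ^ (1 - p) + a₀) / 2 with hb₀def
      have hb₀1 : p ^ p * (1 - p) ^ (1 - p) < b₀ := by rw [hb₀def]; linarith
      have hb₀2 : b₀ < a₀ := by rw [hb₀def]; linarith
      obtain ⟨KK, hKK0, hkey⟩ := LamAux.master hp0 hp1 pack hb₀1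
        (show b₀ < a₀ + 1 by linarith)
      rw [Metric.continuousAt_iff]
      intro ε hε
      set η := min ((a₀ - b₀) / 2) (min (1 / 2) ((ε / (6 * KK)) ^ 2)) with hηdef
      have hη0 : 0 < η := by
        apply lt_min (by linarith)
        apply lt_min (by norm_num)
        positivity
      have hη1 : η ≤ (a₀ - b₀) / 2 := min_le_left _ _
      have hη2 : η ≤ 1 / 2 := le_trans (min_le_right _ _) (min_le_left _ _)
      have hη3 : η ≤ (ε / (6 * KK)) ^ 2 := le_trans (min_le_right _ _) (min_le_right _ _)
      set b := a₀ - η with hbdef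
      have hb₀b : b₀ ≤ b := by rw [hbdef]; linarith
      have hba₀ : b < a₀ := by rw [hbdef]; linarith
      have hbast : p ^ p * (1 - p) ^ (1 - p) < b := lt_of_lt_of_le hb₀1 hb₀b
      obtain ⟨hβb0, hβαb, hψβb, hψαb, hmidb, hb1, hb2⟩ := pack b hbast
      have hJ := LamAux.J_cont hp1 hβb0 hβαb.le
        (LamAux.psi_le_of_pack hψβb hψαb hmidb) hba₀
      rw [Metric.continuousAt_iff] at hJ
      obtain ⟨δ₂, hδ₂0, hδ₂⟩ := hJ (ε / 3) (by linarith)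
      refine ⟨min (η / 2) δ₂, by positivity, ?_⟩
      intro a ha
      rw [Real.dist_eq] at ha ⊢
      have ha1 : |a - a₀| < η / 2 := lt_of_lt_of_le ha (min_le_left _ _)
      have ha2 : |a - a₀| < δ₂ := lt_of_lt_of_le ha (min_le_right _ _)
      have habs := abs_lt.1 ha1
      have hba : b < a := by rw [hbdef]; linarith [habs.1]
      have haA : a ≤ a₀ + 1 := by linarith [habs.2]
      have key1 := (hkey b a hb₀b hba haA).2
      have key2 := (hkey b a₀ hb₀b hba₀ (by linarith)).2
      have hJd : |(∫ x in β b..α b,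
            x ^ (1 - p) / ((a * x ^ (2 * (1 - p)) - p ^ 2) * Real.sqrt (Qfun p a x))) -
          ∫ x in β b..α b,
            x ^ (1 - p) / ((a₀ * x ^ (2 * (1 - p)) - p ^ 2) * Real.sqrt (Qfun p a₀ x))| <
          ε / 3 := by
        have := hδ₂ (show dist a a₀ < δ₂ by rw [Real.dist_eq]; exact ha2)
        rwa [Real.dist_eq] at this
      have hKKb : ∀ t : ℝ, t ≤ 2 * η → KK * Real.sqrt t ≤ ε / 3 := by
        intro t ht
        have hsq2 : (0:ℝ) ≤ (ε / (6 * KK)) ^ 2 := sq_nonneg _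
        have h1 : t ≤ (2 * (ε / (6 * KK))) ^ 2 := by
          have he : (2 * (ε / (6 * KK))) ^ 2 = 4 * (ε / (6 * KK)) ^ 2 := by ring
          rw [he]; linarith
        have h2 : Real.sqrt t ≤ 2 * (ε / (6 * KK)) := by
          have h3 := Real.sqrt_le_sqrt h1
          rwa [Real.sqrt_sq (by positivity)] at h3
        calc KK * Real.sqrt t ≤ KK * (2 * (ε / (6 * KK))) :=
              mul_le_mul_of_nonneg_left h2 hKK0.le
          _ = ε / 3 := by field_simp; ring
      have hd1 : KK * Real.sqrt (a - b) ≤ ε / 3 := by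
        apply hKKb
        rw [hbdef]; linarith [habs.2]
      have hd2 : KK * Real.sqrt (a₀ - b) ≤ ε / 3 := by
        apply hKKb
        rw [hbdef]; linarith
      have k1 := key1.trans hd1
      have k2 := key2.trans hd2
      rw [abs_sub_comm] at k2
      have tri := abs_sub_le
        (∫ x in β a..α a,
          x ^ (1 - p) / ((a * x ^ (2 * (1 - p)) - p ^ 2) * Real.sqrt (Qfun p a x)))
        (∫ x in β b..α b,
          x ^ (1 - p) / ((a * x ^ (2 * (1 - p)) - p ^ 2) * Real.sqrt (Qfun p a x)))
        (∫ x in β a₀..α a₀,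
          x ^ (1 - p) / ((a₀ * x ^ (2 * (1 - p)) - p ^ 2) * Real.sqrt (Qfun p a₀ x)))
      have tri2 := abs_sub_le
        (∫ x in β b..α b,
          x ^ (1 - p) / ((a * x ^ (2 * (1 - p)) - p ^ 2) * Real.sqrt (Qfun p a x)))
        (∫ x in β b..α b,
          x ^ (1 - p) / ((a₀ * x ^ (2 * (1 - p)) - p ^ 2) * Real.sqrt (Qfun p a₀ x)))
        (∫ x in β a₀..α a₀,
          x ^ (1 - p) / ((a₀ * x ^ (2 * (1 - p)) - p ^ 2) * Real.sqrt (Qfun p a₀ x)))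
      linarith
  · -- positivity
    intro a ha
    obtain ⟨h1, h2, h3, h4, h5⟩ := hroots a ha
    have hint := integ a ha
    have hpos : 0 < ∫ x in β a..α a,
        x ^ (1 - p) / ((a * x ^ (2 * (1 - p)) - p ^ 2) * Real.sqrt (Qfun p a x)) :=
      intervalIntegral.intervalIntegral_pos_of_pos_on hint
        (fun x hx => LamAux.F_pos (h1.trans hx.1) (h5 x hx) hp1) h2
    have hsq : 0 < Real.sqrt a := Real.sqrt_pos.2 (hast0.trans ha)
    have hpre : 0 < 2 * p * (1 - p) ^ 2 * Real.sqrt a := by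
      have := pow_pos h1p 2
      positivity
    exact mul_pos hpre hpos
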